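/- Let L_G be the set of positive definite hermitian complex n×n matrices of determinant 1 with the operation A ∘ B defined by the polar decomposition AB = (A ∘ B)·d_{A,B}, d_{A,B} ∈ SU(n). Then (L_G, ∘) satisfies the automorphic inverse property: (A ∘ B)⁻¹ = A⁻¹ ∘ B⁻¹ for all A, B ∈ L_G. -/

import Mathlib

open scoped ComplexOrder

/-- The set of positive definite hermitian complex `n × n` matrices of
determinant 1. -/
def LG (n : ℕ) : Set (Matrix (Fin n) (Fin n) ℂ) :=
  {A | A.PosDef ∧ A.det = 1}

/-- The special unitary group `SU(n)`, as a set of matrices. -/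
def SU (n : ℕ) : Set (Matrix (Fin n) (Fin n) ℂ) :=
  {u | u ∈ Matrix.unitaryGroup (Fin n) ℂ ∧ u.det = 1}

open Matrix in
lemma sq_circ (n : ℕ)
    (circ : Matrix (Fin n) (Fin n) ℂ → Matrix (Fin n) (Fin n) ℂ → Matrix (Fin n) (Fin n) ℂ)
    (hcirc : ∀ A ∈ LG n, ∀ B ∈ LG n,
      circ A B ∈ LG n ∧ ∃ u ∈ SU n, A * B = circ A B * u)
    {A B : Matrix (Fin n) (Fin n) ℂ} (hA : A ∈ LG n) (hB : B ∈ LG n) :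
    circ A B ^ 2 = A * B ^ 2 * A := by
  obtain ⟨⟨hP, _⟩, u, ⟨hu, _⟩, heq⟩ := hcirc A hA B hB
  have huu : u * star u = 1 := (Matrix.mem_unitaryGroup_iff.mp hu)
  have key : (A * B) * (A * B)ᴴ = circ A B * (circ A B)ᴴ := by
    rw [heq, Matrix.conjTranspose_mul, ← Matrix.star_eq_conjTranspose u,
      Matrix.mul_assoc, ← Matrix.mul_assoc u, huu, Matrix.one_mul]
  have hAh : Aᴴ = A := hA.1.1
  have hBh : Bᴴ = B := hB.1.1
  have hPh : (circ A B)ᴴ = circ A B := hP.1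
  rw [Matrix.conjTranspose_mul, hAh, hBh, hPh] at key
  rw [sq, sq, ← key]
  simp [Matrix.mul_assoc]

/-- The loop `(L_G, ∘)` of positive definite hermitian
determinant-1 matrices (operation from polar decomposition) satisfies the
automorphic inverse property `(A ∘ B)⁻¹ = A⁻¹ ∘ B⁻¹`. -/
theorem stmt11 (n : ℕ)
    (circ : Matrix (Fin n) (Fin n) ℂ → Matrix (Fin n) (Fin n) ℂ → Matrix (Fin n) (Fin n) ℂ)
    (hcirc : ∀ A ∈ LG n, ∀ B ∈ LG n,
      circ A B ∈ LG n ∧ ∃ u ∈ SU n, A * B = circ A B * u) :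
    ∀ A ∈ LG n, ∀ B ∈ LG n, (circ A B)⁻¹ = circ A⁻¹ B⁻¹ := by
  intro A hA B hB
  have hA' : A⁻¹ ∈ LG n := ⟨hA.1.inv, by rw [Matrix.det_nonsing_inv, hA.2]; simp⟩
  have hB' : B⁻¹ ∈ LG n := ⟨hB.1.inv, by rw [Matrix.det_nonsing_inv, hB.2]; simp⟩
  have hP : (circ A B).PosDef := (hcirc A hA B hB).1.1
  have hQ : (circ A⁻¹ B⁻¹).PosDef := (hcirc A⁻¹ hA' B⁻¹ hB').1.1
  have h1 : circ A B ^ 2 = A * B ^ 2 * A := sq_circ n circ hcirc hA hB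
  have h2 : circ A⁻¹ B⁻¹ ^ 2 = A⁻¹ * B⁻¹ ^ 2 * A⁻¹ := sq_circ n circ hcirc hA' hB'
  have hBinv : B⁻¹ ^ 2 = (B ^ 2)⁻¹ := by
    rw [sq, sq, Matrix.mul_inv_rev]
  have h3 : circ A⁻¹ B⁻¹ ^ 2 = (circ A B)⁻¹ ^ 2 := by
    have : (circ A B)⁻¹ ^ 2 = (circ A B ^ 2)⁻¹ := by
      rw [sq, sq, Matrix.mul_inv_rev]
    rw [this, h1, h2, hBinv, Matrix.mul_inv_rev, Matrix.mul_inv_rev]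
    simp [Matrix.mul_assoc]
  open scoped MatrixOrder in
  have h0 : (0 : Matrix (Fin n) (Fin n) ℂ) ≤ circ A⁻¹ B⁻¹ ^ 2 := by
    rw [sq]
    have := (Matrix.posSemidef_conjTranspose_mul_self (circ A⁻¹ B⁻¹)).nonneg
    rwa [hQ.1.eq] at this
  open scoped MatrixOrder in
  have e1 := (CFC.sqrt_eq_iff (circ A⁻¹ B⁻¹ ^ 2) (circ A⁻¹ B⁻¹) h0 hQ.posSemidef.nonneg).mpr (sq _).symm
  open scoped MatrixOrder in
  have e2 := (CFC.sqrt_eq_iff (circ A⁻¹ B⁻¹ ^ 2) (circ A B)⁻¹ h0 hP.inv.posSemidef.nonneg).mpr (by rw [h3, sq])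
  exact e2.symm.trans e1
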